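/- Let α > 1, K ≥ 2 an integer, i* ∈ {1,…,K}, and λ ∈ ℝ^K. Let r = (r_1,…,r_K) have i.i.d. Pareto components with shape α (density α x^{-(α+1)} on [1,∞)), and let I(r) denote the index i minimizing λ_i − r_i, which is unique almost surely. Then E[r_{I(r)} − r_{i*}] ≤ (α/(α−1)) ∑_{i≠i*} (1 + λ̲_i)^{-(α−1)}, where λ̲ := λ − (min_j λ_j)·𝟏. -/

import Mathlib

open MeasureTheory ProbabilityTheory Real Set
open scoped ENNReal NNReal

namespace FtplParetoAux

/-- truncated identity: `x` if `t ≤ x`, else `0`. -/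
noncomputable def gfun (t x : ℝ) : ℝ := if t ≤ x then x else 0

lemma gfun_nonneg {t x : ℝ} (hx : 0 ≤ x) : 0 ≤ gfun t x := by
  unfold gfun; split_ifs <;> simp [hx]

lemma measurable_gfun (t : ℝ) : Measurable (gfun t) :=
  Measurable.ite measurableSet_Ici measurable_id measurable_const

lemma pareto_ae_one_le {α : ℝ} : ∀ᵐ x ∂(paretoMeasure 1 α), 1 ≤ x := by
  rw [ae_iff]
  have h : {x : ℝ | ¬ (1:ℝ) ≤ x} = Set.Iio 1 := by ext x; simp [Set.mem_Iio, not_le]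
  rw [h, paretoMeasure, withDensity_apply _ measurableSet_Iio,
    lintegral_paretoPDF_of_le le_rfl]

lemma key_prod {α t : ℝ} (hα : 0 < α) (ht : 1 ≤ t) (x : ℝ) :
    gfun t x * (paretoPDF 1 α x).toReal
      = Set.indicator (Set.Ici t) (fun x => α * x ^ (-α)) x := by
  have htoReal : (paretoPDF 1 α x).toReal = paretoPDFReal 1 α x := by
    rw [paretoPDF, ENNReal.toReal_ofReal (paretoPDFReal_nonneg zero_le_one hα.le x)]
  rw [htoReal]
  by_cases hx : t ≤ x
  · have hx1 : (1:ℝ) ≤ x := le_trans ht hx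
    have hx0 : (0:ℝ) < x := lt_of_lt_of_le one_pos hx1
    rw [Set.indicator_of_mem (show x ∈ Set.Ici t from hx), gfun, if_pos hx, paretoPDFReal, if_pos hx1, one_rpow, mul_one]
    rw [show (-α) = (-(α+1)) + 1 by ring, Real.rpow_add hx0, Real.rpow_one]
    ring
  · rw [Set.indicator_of_notMem (show x ∉ Set.Ici t from hx), gfun, if_neg hx, zero_mul]

lemma integrableOn_aux {α t : ℝ} (hα : 1 < α) (ht : 0 < t) :
    IntegrableOn (fun x : ℝ => α * x ^ (-α)) (Set.Ici t) := by
  rw [integrableOn_Ici_iff_integrableOn_Ioi]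
  exact (integrableOn_Ioi_rpow_of_lt (by linarith) ht).const_mul α

lemma integral_aux {α t : ℝ} (hα : 1 < α) (ht : 0 < t) :
    ∫ x in Set.Ici t, α * x ^ (-α) = α / (α - 1) * t ^ (-(α - 1)) := by
  rw [MeasureTheory.integral_Ici_eq_integral_Ioi, integral_const_mul,
    integral_Ioi_rpow_of_lt (by linarith) ht, show (-α) + 1 = -(α-1) by ring]
  have h1 : α - 1 ≠ 0 := by linarith
  have h2 : (1:ℝ) - α ≠ 0 := by linarith
  field_simp

lemma g_integrable {α t : ℝ} (hα : 1 < α) (ht : 1 ≤ t) :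
    Integrable (gfun t) (paretoMeasure 1 α) := by
  have hα0 : (0:ℝ) < α := by linarith
  have hpdf : Measurable (paretoPDF 1 α) := (measurable_paretoPDFReal 1 α).ennreal_ofReal
  rw [paretoMeasure, integrable_withDensity_iff hpdf
    (ae_of_all _ fun x => ENNReal.ofReal_lt_top)]
  have h : (fun x => gfun t x * (paretoPDF 1 α x).toReal)
      = Set.indicator (Set.Ici t) (fun x => α * x ^ (-α)) :=
    funext fun x => key_prod hα0 ht x
  rw [h]
  exact (integrableOn_aux hα (lt_of_lt_of_le one_pos ht)).integrable_indicator measurableSet_Ici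

lemma g_integral {α t : ℝ} (hα : 1 < α) (ht : 1 ≤ t) :
    ∫ x, gfun t x ∂(paretoMeasure 1 α) = α / (α - 1) * t ^ (-(α - 1)) := by
  have hα0 : (0:ℝ) < α := by linarith
  have hμ : paretoMeasure 1 α
      = volume.withDensity (fun x => ((paretoPDFReal 1 α x).toNNReal : ℝ≥0∞)) := rfl
  rw [hμ, integral_withDensity_eq_integral_smul
    ((measurable_paretoPDFReal 1 α).real_toNNReal)]
  have h : ∀ x, (paretoPDFReal 1 α x).toNNReal • gfun t x
      = Set.indicator (Set.Ici t) (fun x => α * x ^ (-α)) x := by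
    intro x
    have hc : ((paretoPDFReal 1 α x).toNNReal : ℝ) = paretoPDFReal 1 α x :=
      Real.coe_toNNReal _ (paretoPDFReal_nonneg zero_le_one hα0.le x)
    rw [NNReal.smul_def, hc, smul_eq_mul, mul_comm]
    have := key_prod hα0 ht x
    rwa [paretoPDF, ENNReal.toReal_ofReal (paretoPDFReal_nonneg zero_le_one hα0.le x)] at this
  rw [funext h, MeasureTheory.integral_indicator measurableSet_Ici, integral_aux hα
    (lt_of_lt_of_le one_pos ht)]

lemma id_integrable {α : ℝ} (hα : 1 < α) :
    Integrable (fun x : ℝ => x) (paretoMeasure 1 α) := by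
  refine (g_integrable hα le_rfl).congr ?_
  filter_upwards [pareto_ae_one_le] with x hx
  rw [gfun, if_pos hx]

lemma map_eval {K : ℕ} (μ : Measure ℝ) [IsProbabilityMeasure μ] (i : Fin K) :
    (Measure.pi fun _ : Fin K => μ).map (Function.eval i) = μ := by
  refine Measure.ext fun s hs => ?_
  rw [Measure.map_apply (measurable_pi_apply i) hs, Set.eval_preimage, Measure.pi_pi]
  rw [Finset.prod_eq_single i
    (fun j _ hji => by rw [Function.update_of_ne hji]; exact measure_univ)
    (fun h => absurd (Finset.mem_univ i) h)]
  rw [Function.update_self]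

end FtplParetoAux

open FtplParetoAux

/-- penalty bound, gap-dependent form. If `I r` selects the (a.s. unique)
minimizer of `λ_i − r_i` under i.i.d. Pareto(α) perturbations, then
`E[r_{I(r)} − r_{i*}] ≤ (α/(α−1)) ∑_{i≠i*} (1+λ̲_i)^{-(α−1)}`. -/
theorem ftpl_pareto_penalty_gap_bound
    (α : ℝ) (hα : 1 < α) (K : ℕ) (hK : 2 ≤ K) (istar : Fin K) (lam : Fin K → ℝ)
    (I : (Fin K → ℝ) → Fin K) (hI : Measurable I)
    (hmin : ∀ᵐ r ∂(Measure.pi fun _ : Fin K => paretoMeasure 1 α),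
      ∀ j, lam (I r) - r (I r) ≤ lam j - r j) :
    (∫ r, (r (I r) - r istar) ∂(Measure.pi fun _ : Fin K => paretoMeasure 1 α))
      ≤ α / (α - 1) *
          ∑ i ∈ Finset.univ.erase istar,
            (1 + (lam i - ⨅ j, lam j)) ^ (-(α - 1)) := by
  classical
  haveI : IsProbabilityMeasure (paretoMeasure 1 α) :=
    isProbabilityMeasure_paretoMeasure one_pos (by linarith)
  haveI : Nonempty (Fin K) := ⟨istar⟩
  set μ := paretoMeasure 1 α with hμdef
  set P := Measure.pi fun _ : Fin K => μ with hPdef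
  set m := ⨅ j, lam j with hmdef
  have hbdd : BddBelow (Set.range lam) := (Set.finite_range lam).bddBelow
  obtain ⟨j0, hj0⟩ : ∃ j, lam j = m := exists_eq_ciInf_of_finite
  have hmle : ∀ i, m ≤ lam i := fun i => ciInf_le hbdd i
  set t : Fin K → ℝ := fun i => 1 + (lam i - m) with htdef
  have ht1 : ∀ i, 1 ≤ t i := fun i => by
    have := hmle i; simp only [htdef]; linarith
  have hmap : ∀ i : Fin K, P.map (Function.eval i) = μ := fun i => map_eval μ i
  have hcoordInt : ∀ (i : Fin K) (f : ℝ → ℝ), Measurable f → Integrable f μ →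
      Integrable (fun r : Fin K → ℝ => f (r i)) P := by
    intro i f hf hfi
    have h1 : Integrable f (P.map (Function.eval i)) := by rw [hmap i]; exact hfi
    exact (integrable_map_measure (by rw [hmap i]; exact hf.aestronglyMeasurable)
      (measurable_pi_apply i).aemeasurable).mp h1
  have hcoordEq : ∀ (i : Fin K) (f : ℝ → ℝ), Measurable f →
      ∫ r, f (r i) ∂P = ∫ x, f x ∂μ := by
    intro i f hf
    rw [← hmap i, integral_map (measurable_pi_apply i).aemeasurable
      (by rw [hmap i]; exact hf.aestronglyMeasurable)]
    try rfl
  have hae1 : ∀ᵐ r ∂P, ∀ i, 1 ≤ r i :=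
    Filter.eventually_all.2 fun i => Measure.tendsto_eval_ae_ae.eventually pareto_ae_one_le
  have hIdInt : Integrable (fun x : ℝ => x) μ := id_integrable hα
  have hcoordId : ∀ i, Integrable (fun r : Fin K → ℝ => r i) P := fun i =>
    hcoordInt i _ measurable_id hIdInt
  have hmeasI : Measurable fun r : Fin K → ℝ => r (I r) := by
    have h : (fun r : Fin K → ℝ => r (I r))
        = fun r => ∑ i : Fin K, if I r = i then r i else 0 := by
      funext r; rw [Finset.sum_ite_eq]; simp
    rw [h]
    exact Finset.measurable_sum _ fun i _ =>
      Measurable.ite (hI (measurableSet_singleton i)) (measurable_pi_apply i) measurable_const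
  have hFInt : Integrable (fun r : Fin K → ℝ => r (I r) - r istar) P := by
    have h1 : Integrable (fun r : Fin K → ℝ => r (I r)) P := by
      refine Integrable.mono' (g := fun r : Fin K → ℝ => ∑ i : Fin K, |r i|)
        (integrable_finset_sum _ fun i _ => (hcoordId i).abs) hmeasI.aestronglyMeasurable ?_
      refine ae_of_all _ fun r => ?_
      rw [Real.norm_eq_abs]
      exact Finset.single_le_sum (f := fun i => |r i|) (fun i _ => abs_nonneg _)
        (Finset.mem_univ (I r))
    exact h1.sub (hcoordId istar)
  have hGiInt : ∀ i : Fin K, Integrable (fun r : Fin K → ℝ => gfun (t i) (r i)) P :=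
    fun i => hcoordInt i _ (measurable_gfun (t i)) (g_integrable hα (ht1 i))
  have hGInt : Integrable
      (fun r : Fin K → ℝ => ∑ i ∈ Finset.univ.erase istar, gfun (t i) (r i)) P :=
    integrable_finset_sum _ fun i _ => hGiInt i
  have hbound : ∀ᵐ r ∂P, r (I r) - r istar
      ≤ ∑ i ∈ Finset.univ.erase istar, gfun (t i) (r i) := by
    filter_upwards [hmin, hae1] with r hr h1
    by_cases hcase : I r = istar
    · rw [hcase, sub_self]
      exact Finset.sum_nonneg fun i _ => gfun_nonneg (le_trans zero_le_one (h1 i))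
    · have hmem : t (I r) ≤ r (I r) := by
        have h2 := hr j0
        have h3 := h1 j0
        simp only [htdef]
        rw [← hj0]
        linarith
      have hg : gfun (t (I r)) (r (I r)) = r (I r) := by
        unfold gfun; exact if_pos hmem
      calc r (I r) - r istar ≤ r (I r) := by have := h1 istar; linarith
        _ = gfun (t (I r)) (r (I r)) := hg.symm
        _ ≤ ∑ i ∈ Finset.univ.erase istar, gfun (t i) (r i) :=
            Finset.single_le_sum (fun i _ => gfun_nonneg (le_trans zero_le_one (h1 i)))
              (Finset.mem_erase.mpr ⟨hcase, Finset.mem_univ _⟩)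
  calc (∫ r, (r (I r) - r istar) ∂P)
      ≤ ∫ r, ∑ i ∈ Finset.univ.erase istar, gfun (t i) (r i) ∂P :=
        integral_mono_ae hFInt hGInt hbound
    _ = ∑ i ∈ Finset.univ.erase istar, ∫ r, gfun (t i) (r i) ∂P :=
        integral_finset_sum _ fun i _ => hGiInt i
    _ = ∑ i ∈ Finset.univ.erase istar, α / (α - 1) * (t i) ^ (-(α - 1)) := by
        refine Finset.sum_congr rfl fun i _ => ?_
        rw [hcoordEq i _ (measurable_gfun (t i)), g_integral hα (ht1 i)]
    _ = α / (α - 1) * ∑ i ∈ Finset.univ.erase istar,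
          (1 + (lam i - ⨅ j, lam j)) ^ (-(α - 1)) := by
        rw [Finset.mul_sum]
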